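/- Let ℓ ≥ 1 and a_1 ≥ a_2 ≥ … ≥ a_ℓ > 0, and use in every reduced election with t nominees the scoring vector (a_1, …, a_ℓ, 0, …, 0) of length t. Let (S, ℱ, k) be a Hitting Set instance with S = {s_1, …, s_n}, ℱ = {F_1, …, F_m}, and 1 ≤ k ≤ n. Construct the election with parties P = {p}, P_w = {w}, P_i = {s_1^i, …, s_n^i} for each i ∈ [k] (s_r^i being the i-th copy of element s_r), and 4(ℓ−1) further singleton parties whose members are grouped into four sets D_1, D_2, D_3, D_4 of size ℓ−1 each; write F_j^i = {s^i : s ∈ F_j}. The 6m+3 voters are: one voter with order D_1 ≻ w ≻ [rest]; for each j ∈ [m] two voters with order F_j^1 ≻ F_j^2 ≻ … ≻ F_j^k ≻ D_2 ≻ p ≻ [rest]; 2m+1 voters with order w ≻ D_3 ≻ [rest]; and 2m+1 voters with order p ≻ D_4 ≻ [rest], where each displayed set stands for its elements in some fixed order and [rest] denotes all remaining candidates in an arbitrary order. Then, for every choice of these arbitrary orders, p is a necessary president in this election if and only if (S, ℱ) admits no hitting set of size at most k. -/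

import Mathlib

open scoped Classical

noncomputable section

/-- Candidates: `p`, `w`, a candidate `s_r^i` for each copy `i ∈ [k]` of each element
`r ∈ [n]`, and four groups of `ℓ−1` dummies each. -/
inductive HCand (n k ℓ : ℕ) where
  | pp : HCand n k ℓ
  | ww : HCand n k ℓ
  | elem : Fin k → Fin n → HCand n k ℓ
  | dum : Fin 4 → Fin (ℓ - 1) → HCand n k ℓ
  deriving DecidableEq, Fintype

/-- Voters: the voter `w`, two voters `u_j`, `u'_j` for every set `F_j`, `2m+1`
voters of kind `v0`, and `2m+1` voters of kind `v0'`; `6m+3` voters in total. -/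
inductive HVoter (m : ℕ) where
  | w0 : HVoter m
  | u : Fin m → Bool → HVoter m
  | v0 : Fin (2 * m + 1) → HVoter m
  | v0' : Fin (2 * m + 1) → HVoter m
  deriving DecidableEq, Fintype

variable {n k m ℓ : ℕ}

/-- For each voter, the index of the block of candidates a candidate belongs to in
that voter's preference order (blocks are linearly ordered; the order inside a block
is arbitrary).  `F j` is the `j`-th set of the Hitting Set instance. -/
def hgrp (kk : ℕ) (F : Fin m → Finset (Fin n)) : HVoter m → HCand n k ℓ → ℕ
  | .w0, .dum h _ => if h = 0 then 0 else 2
  | .w0, .ww => 1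
  | .w0, _ => 2
  | .u j _, .elem i r => if r ∈ F j then i.val else kk + 2
  | .u _ _, .dum h _ => if h = 1 then kk else kk + 2
  | .u _ _, .pp => kk + 1
  | .u _ _, .ww => kk + 2
  | .v0 _, .ww => 0
  | .v0 _, .dum h _ => if h = 2 then 1 else 2
  | .v0 _, _ => 2
  | .v0' _, .pp => 0
  | .v0' _, .dum h _ => if h = 3 then 1 else 2
  | .v0' _, _ => 2

/-- Each candidate is sent to the index of its party. -/
def hrep : HCand n k ℓ → Unit ⊕ Unit ⊕ Fin k ⊕ (Fin 4 × Fin (ℓ - 1))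
  | .pp => Sum.inl ()
  | .ww => Sum.inr (Sum.inl ())
  | .elem i _ => Sum.inr (Sum.inr (Sum.inl i))
  | .dum h d => Sum.inr (Sum.inr (Sum.inr (h, d)))

/-- The parties: `{p}`, `{w}`, `P_i = {s_1^i, …, s_n^i}` for `i ∈ [k]`, and
singleton dummy parties. -/
def hparties (n k ℓ : ℕ) : Finset (Finset (HCand n k ℓ)) :=
  Finset.univ.image fun c : HCand n k ℓ => Finset.univ.filter fun c' => hrep c' = hrep c

/-- Score of `c` over the nominee set `C'` for the scoring vector `(a 0, a 1, …)`,
where `a k` is the number of points a voter gives to a candidate preceded by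
exactly `k` nominees in her preference order. -/
def posScore {C V : Type*} [Fintype V] (a : ℕ → ℤ) (pref : V → C → C → Prop)
    (C' : Finset C) (c : C) : ℤ :=
  ∑ v : V, a ((C'.filter fun c' => pref v c' c).card)

/-- `C'` contains exactly one nominee of each party of `Ps`. -/
def IsNomineeSet {C : Type*} (Ps : Finset (Finset C)) (C' : Finset C) : Prop :=
  ∀ Pt ∈ Ps, (C' ∩ Pt).card = 1

/-- `p` is a winner of every reduced election containing `p`. -/
def NecessaryPresident {C V : Type*} [Fintype V] (a : ℕ → ℤ)
    (pref : V → C → C → Prop) (Ps : Finset (Finset C)) (p : C) : Prop :=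
  ∀ C' : Finset C, IsNomineeSet Ps C' → p ∈ C' →
    ∀ c ∈ C', posScore a pref C' c ≤ posScore a pref C' p

def hVoterEquiv (m : ℕ) : (Unit ⊕ Fin m × Bool) ⊕ (Fin (2*m+1) ⊕ Fin (2*m+1)) ≃ HVoter m where
  toFun x := match x with
    | .inl (.inl _) => .w0
    | .inl (.inr (j, b)) => .u j b
    | .inr (.inl i) => .v0 i
    | .inr (.inr i) => .v0' i
  invFun v := match v with
    | .w0 => .inl (.inl ())
    | .u j b => .inl (.inr (j, b))
    | .v0 i => .inr (.inl i)
    | .v0' i => .inr (.inr i)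
  left_inv x := by rcases x with (_ | ⟨j, b⟩) | (i | i) <;> rfl
  right_inv v := by cases v <;> rfl

lemma sum_voters (f : HVoter m → ℤ) :
    ∑ v : HVoter m, f v =
      f .w0 + (∑ j : Fin m, (f (.u j true) + f (.u j false)))
        + (∑ i : Fin (2*m+1), f (.v0 i)) + (∑ i : Fin (2*m+1), f (.v0' i)) := by
  rw [← Equiv.sum_comp (hVoterEquiv m) f]
  simp [Fintype.sum_sum_type, Fintype.sum_prod_type, hVoterEquiv]
  ring

def hDum (n k ℓ : ℕ) (h : Fin 4) : Finset (HCand n k ℓ) :=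
  Finset.univ.image (HCand.dum h)

lemma hDum_card (h : Fin 4) : (hDum n k ℓ h).card = ℓ - 1 := by
  rw [hDum, Finset.card_image_of_injective _ (fun x y hxy => by injection hxy)]
  simp

lemma mem_hDum {h : Fin 4} {x : HCand n k ℓ} : x ∈ hDum n k ℓ h ↔ ∃ d, x = HCand.dum h d := by
  simp [hDum, eq_comm]

lemma card_insert_hDum (hℓ : 1 ≤ ℓ) {c : HCand n k ℓ} {h : Fin 4}
    (hc : ∀ d, c ≠ HCand.dum h d) : (insert c (hDum n k ℓ h)).card = ℓ := by
  rw [Finset.card_insert_of_notMem (by simp only [mem_hDum]; push_neg; exact hc), hDum_card]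
  omega


/-- for every short scoring rule `(a_1, …, a_ℓ, 0, …, 0)` with
`a_1 ≥ … ≥ a_ℓ > 0`, in the election constructed from a Hitting Set instance
`(S, ℱ, k)`, the candidate `p` is a necessary president iff the instance admits no
hitting set of size at most `k`. -/
theorem short_rule_necessary_president_iff_no_hitting_set
    (n m k ℓ : ℕ) (hℓ : 1 ≤ ℓ) (hk : 1 ≤ k) (hkn : k ≤ n)
    (F : Fin m → Finset (Fin n))
    -- the scoring vector: `a j` is the points for position `j+1`
    (a : ℕ → ℤ)
    (hanti : ∀ i j : ℕ, i ≤ j → j < ℓ → a j ≤ a i)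
    (hpos : 0 < a (ℓ - 1))
    (hzero : ∀ j : ℕ, ℓ ≤ j → a j = 0)
    -- the preference orders, consistent with the prescribed blocks
    (pref : HVoter m → HCand n k ℓ → HCand n k ℓ → Prop)
    (hlin : ∀ v, IsStrictTotalOrder (HCand n k ℓ) (pref v))
    (hord : ∀ v c c', hgrp k F v c < hgrp k F v c' → pref v c c') :
    NecessaryPresident a pref (hparties n k ℓ) HCand.pp ↔
      ¬ ∃ S' : Finset (Fin n), S'.card ≤ k ∧ ∀ j : Fin m, ∃ s ∈ S', s ∈ F j := by
  classical
  -- basic score facts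
  have ha0 : ∀ s, 0 ≤ a s := by
    intro s
    rcases lt_or_ge s ℓ with hs | hs
    · exact le_trans hpos.le (hanti s (ℓ - 1) (by omega) (by omega))
    · simp [hzero s hs]
  have hamono : ∀ s t : ℕ, s ≤ t → a t ≤ a s := by
    intro s t hst
    rcases lt_or_ge t ℓ with ht | ht
    · exact hanti s t hst ht
    · rw [hzero t ht]; exact ha0 s
  have ha0pos : 0 < a 0 := lt_of_lt_of_le hpos (hamono 0 (ℓ - 1) (Nat.zero_le _))
  have hirr : ∀ v (c : HCand n k ℓ), ¬ pref v c c := by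
    intro v c
    haveI := hlin v
    exact irrefl_of (pref v) c
  have hasym : ∀ v (c c' : HCand n k ℓ), pref v c c' → ¬ pref v c' c := by
    intro v c c' h1 h2
    haveI := hlin v
    exact hirr v c (trans_of (pref v) h1 h2)
  -- main structural analysis of an arbitrary nominee set
  have main : ∀ C' : Finset (HCand n k ℓ), IsNomineeSet (hparties n k ℓ) C' →
      ∃ σ : Fin k → Fin n,
        (∀ i r, HCand.elem i r ∈ C' ↔ r = σ i) ∧
        HCand.ww ∈ C' ∧
        posScore a pref C' HCand.pp
          = (2 * (m : ℤ) + 1) * a 0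
            + ∑ j : Fin m, 2 * a ((Finset.univ.filter fun i => σ i ∈ F j).card + (ℓ - 1)) ∧
        posScore a pref C' HCand.ww = (2 * (m : ℤ) + 1) * a 0 + a (ℓ - 1) ∧
        (∀ c ∈ C', c ≠ HCand.pp → c ≠ HCand.ww →
          posScore a pref C' c ≤ (2 * (m : ℤ) + 1) * a 0) := by
    intro C' hC
    have hfib : ∀ c : HCand n k ℓ, (C'.filter fun c' => hrep c' = hrep c).card = 1 := by
      intro c
      have h1 := hC _ (Finset.mem_image_of_mem _ (Finset.mem_univ c))
      convert h1 using 2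
      ext x
      simp only [Finset.mem_filter, Finset.mem_inter, Finset.mem_univ, true_and]
    have hex : ∀ c : HCand n k ℓ, ∃ x ∈ C', hrep x = hrep c := by
      intro c
      have h1 := hfib c
      rw [Finset.card_eq_one] at h1
      obtain ⟨x, hx⟩ := h1
      have hxm := hx ▸ Finset.mem_singleton_self x
      rw [Finset.mem_filter] at hxm
      exact ⟨x, hxm.1, hxm.2⟩
    have huniq : ∀ (c x y : HCand n k ℓ), x ∈ C' → y ∈ C' →
        hrep x = hrep c → hrep y = hrep c → x = y := by
      intro c x y hx hy hxr hyr
      exact Finset.card_le_one.mp (hfib c).le x (Finset.mem_filter.mpr ⟨hx, hxr⟩) y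
        (Finset.mem_filter.mpr ⟨hy, hyr⟩)
    have hpp : HCand.pp ∈ C' := by
      obtain ⟨x, hx, hxr⟩ := hex (HCand.pp : HCand n k ℓ)
      rcases x with _ | _ | ⟨i', r'⟩ | ⟨h', d'⟩ <;> simp [hrep] at hxr <;> try exact hx
    have hww : HCand.ww ∈ C' := by
      obtain ⟨x, hx, hxr⟩ := hex (HCand.ww : HCand n k ℓ)
      rcases x with _ | _ | ⟨i', r'⟩ | ⟨h', d'⟩ <;> simp [hrep] at hxr <;> try exact hx
    have hdum : ∀ h d, HCand.dum h d ∈ C' := by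
      intro h d
      obtain ⟨x, hx, hxr⟩ := hex (HCand.dum h d)
      rcases x with _ | _ | ⟨i', r'⟩ | ⟨h', d'⟩ <;> simp [hrep, Prod.ext_iff] at hxr
      obtain ⟨rfl, rfl⟩ := hxr
      exact hx
    have hσex : ∀ i : Fin k, ∃ r : Fin n, HCand.elem i r ∈ C' := by
      intro i
      obtain ⟨x, hx, hxr⟩ := hex (HCand.elem i ⟨0, by omega⟩)
      rcases x with _ | _ | ⟨i', r'⟩ | ⟨h', d'⟩ <;> simp [hrep] at hxr
      subst hxr
      exact ⟨r', hx⟩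
    choose σ hσ using hσex
    have hmem : ∀ i r, HCand.elem i r ∈ C' ↔ r = σ i := by
      intro i r
      constructor
      · intro hr
        have h2 := huniq (HCand.elem i r) _ _ (hσ i) hr rfl rfl
        injection h2 with h3 h4
        exact h4.symm
      · rintro rfl; exact hσ i
    -- counting helpers
    have hsubD : ∀ (c : HCand n k ℓ) (h : Fin 4), c ∈ C' → insert c (hDum n k ℓ h) ⊆ C' := by
      intro c h hc x hx
      rcases Finset.mem_insert.mp hx with rfl | hx
      · exact hc
      · obtain ⟨d, rfl⟩ := mem_hDum.mp hx
        exact hdum h d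
    have lower0 : ∀ (v : HVoter m) (c : HCand n k ℓ) (E : Finset (HCand n k ℓ)), E ⊆ C' →
        (∀ x ∈ E, hgrp k F v x < hgrp k F v c) →
        E.card ≤ ((C'.filter fun c' => pref v c' c)).card := by
      intro v c E hE hlt
      apply Finset.card_le_card
      intro x hx
      exact Finset.mem_filter.mpr ⟨hE hx, hord v x c (hlt x hx)⟩
    have zterm : ∀ (v : HVoter m) (c : HCand n k ℓ) (E : Finset (HCand n k ℓ)), E ⊆ C' →
        (∀ x ∈ E, hgrp k F v x < hgrp k F v c) → ℓ ≤ E.card →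
        a ((C'.filter fun c' => pref v c' c).card) = 0 := by
      intro v c E hE hlt hcard
      exact hzero _ (le_trans hcard (lower0 v c E hE hlt))
    have exact0 : ∀ (v : HVoter m) (c : HCand n k ℓ) (E : Finset (HCand n k ℓ)), E ⊆ C' →
        (∀ x ∈ E, hgrp k F v x < hgrp k F v c) →
        (∀ x ∈ C', hgrp k F v x ≤ hgrp k F v c → x ≠ c → x ∈ E) →
        (C'.filter fun c' => pref v c' c) = E := by
      intro v c E hE hlt hback
      apply Finset.Subset.antisymm
      · intro x hx
        rw [Finset.mem_filter] at hx
        obtain ⟨hxC, hxp⟩ := hx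
        refine hback x hxC ?_ ?_
        · by_contra hcon
          push_neg at hcon
          exact hasym v c x (hord v c x hcon) hxp
        · rintro rfl
          exact hirr v x hxp
      · intro x hx
        exact Finset.mem_filter.mpr ⟨hE hx, hord v x c (hlt x hx)⟩
    -- uniform vanishing lemmas
    have zw0 : ∀ c : HCand n k ℓ, hgrp k F HVoter.w0 c = 2 →
        a ((C'.filter fun c' => pref HVoter.w0 c' c).card) = 0 := by
      intro c hcg
      refine zterm _ _ (insert HCand.ww (hDum n k ℓ 0)) (hsubD _ _ hww) ?_ ?_
      · intro x hx
        rcases Finset.mem_insert.mp hx with rfl | hx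
        · rw [hcg]; simp [hgrp]; all_goals omega
        · obtain ⟨d, rfl⟩ := mem_hDum.mp hx
          rw [hcg]; simp [hgrp]; all_goals omega
      · rw [card_insert_hDum hℓ (by intro d hd; cases hd)]
    have zu : ∀ (j : Fin m) (b : Bool) (c : HCand n k ℓ), hgrp k F (HVoter.u j b) c = k + 2 →
        a ((C'.filter fun c' => pref (HVoter.u j b) c' c).card) = 0 := by
      intro j b c hcg
      refine zterm _ _ (insert HCand.pp (hDum n k ℓ 1)) (hsubD _ _ hpp) ?_ ?_
      · intro x hx
        rcases Finset.mem_insert.mp hx with rfl | hx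
        · rw [hcg]; simp [hgrp]; all_goals omega
        · obtain ⟨d, rfl⟩ := mem_hDum.mp hx
          rw [hcg]; simp [hgrp]; all_goals omega
      · rw [card_insert_hDum hℓ (by intro d hd; cases hd)]
    have zv0 : ∀ (i : Fin (2*m+1)) (c : HCand n k ℓ), hgrp k F (HVoter.v0 i) c = 2 →
        a ((C'.filter fun c' => pref (HVoter.v0 i) c' c).card) = 0 := by
      intro i c hcg
      refine zterm _ _ (insert HCand.ww (hDum n k ℓ 2)) (hsubD _ _ hww) ?_ ?_
      · intro x hx
        rcases Finset.mem_insert.mp hx with rfl | hx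
        · rw [hcg]; simp [hgrp]; all_goals omega
        · obtain ⟨d, rfl⟩ := mem_hDum.mp hx
          rw [hcg]; simp [hgrp]; all_goals omega
      · rw [card_insert_hDum hℓ (by intro d hd; cases hd)]
    have zv0' : ∀ (i : Fin (2*m+1)) (c : HCand n k ℓ), hgrp k F (HVoter.v0' i) c = 2 →
        a ((C'.filter fun c' => pref (HVoter.v0' i) c' c).card) = 0 := by
      intro i c hcg
      refine zterm _ _ (insert HCand.pp (hDum n k ℓ 3)) (hsubD _ _ hpp) ?_ ?_
      · intro x hx
        rcases Finset.mem_insert.mp hx with rfl | hx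
        · rw [hcg]; simp [hgrp]; all_goals omega
        · obtain ⟨d, rfl⟩ := mem_hDum.mp hx
          rw [hcg]; simp [hgrp]; all_goals omega
      · rw [card_insert_hDum hℓ (by intro d hd; cases hd)]
    refine ⟨σ, hmem, hww, ?_, ?_, ?_⟩
    · -- score of pp
      have tu : ∀ (j : Fin m) (b : Bool),
          a ((C'.filter fun c' => pref (HVoter.u j b) c' HCand.pp).card)
            = a ((Finset.univ.filter fun i => σ i ∈ F j).card + (ℓ - 1)) := by
        intro j b
        have hE : (C'.filter fun c' => pref (HVoter.u j b) c' HCand.pp)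
            = ((Finset.univ.filter fun i => σ i ∈ F j).image fun i => HCand.elem i (σ i))
              ∪ hDum n k ℓ 1 := by
          refine exact0 _ _ _ ?_ ?_ ?_
          · intro x hx
            rcases Finset.mem_union.mp hx with hx | hx
            · obtain ⟨i, -, rfl⟩ := Finset.mem_image.mp hx
              exact hσ i
            · obtain ⟨d, rfl⟩ := mem_hDum.mp hx
              exact hdum 1 d
          · intro x hx
            rcases Finset.mem_union.mp hx with hx | hx
            · obtain ⟨i, hi, rfl⟩ := Finset.mem_image.mp hx
              have hi' : σ i ∈ F j := (Finset.mem_filter.mp hi).2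
              simp only [hgrp, if_pos hi']
              omega
            · obtain ⟨d, rfl⟩ := mem_hDum.mp hx
              simp [hgrp]
          · intro x hx hle hne
            rcases x with _ | _ | ⟨i, r⟩ | ⟨h, d⟩
            · exact absurd rfl hne
            · simp [hgrp] at hle
            · have hr : r = σ i := (hmem i r).mp hx
              subst hr
              by_cases hin : σ i ∈ F j
              · exact Finset.mem_union_left _ (Finset.mem_image.mpr
                  ⟨i, Finset.mem_filter.mpr ⟨Finset.mem_univ i, hin⟩, rfl⟩)
              · simp only [hgrp, if_neg hin] at hle
                omega
            · by_cases hh : h = 1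
              · subst hh
                exact Finset.mem_union_right _ (mem_hDum.mpr ⟨d, rfl⟩)
              · simp only [hgrp, if_neg hh] at hle
                omega
        rw [hE, Finset.card_union_of_disjoint, Finset.card_image_of_injective, hDum_card]
        · intro x y hxy
          injection hxy
        · rw [Finset.disjoint_left]
          intro x hx hx'
          obtain ⟨i, -, rfl⟩ := Finset.mem_image.mp hx
          obtain ⟨d, hd⟩ := mem_hDum.mp hx'
          cases hd
      have tv0' : ∀ i : Fin (2*m+1),
          a ((C'.filter fun c' => pref (HVoter.v0' i) c' HCand.pp).card) = a 0 := by
        intro i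
        have hE : (C'.filter fun c' => pref (HVoter.v0' i) c' HCand.pp) = ∅ := by
          refine exact0 _ _ _ (Finset.empty_subset _) (by simp) ?_
          intro x hx hle hne
          exfalso
          rcases x with _ | _ | ⟨i', r⟩ | ⟨h, d⟩
          · exact hne rfl
          · simp [hgrp] at hle
          · simp [hgrp] at hle
          · by_cases hh : h = 3 <;> simp [hgrp, hh] at hle
        rw [hE]
        simp
      rw [posScore, sum_voters (fun v => a ((C'.filter fun c' => pref v c' HCand.pp).card))]
      rw [zw0 _ (by simp [hgrp])]
      simp only [tu, tv0']
      rw [Finset.sum_congr rfl (fun i _ => zv0 i HCand.pp (by simp [hgrp]))]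
      simp [Finset.sum_const, Finset.card_univ, two_mul]
      push_cast
      ring
    · -- score of ww
      have tw0 : a ((C'.filter fun c' => pref HVoter.w0 c' HCand.ww).card) = a (ℓ - 1) := by
        have hE : (C'.filter fun c' => pref HVoter.w0 c' HCand.ww) = hDum n k ℓ 0 := by
          refine exact0 _ _ _ ?_ ?_ ?_
          · intro x hx
            obtain ⟨d, rfl⟩ := mem_hDum.mp hx
            exact hdum 0 d
          · intro x hx
            obtain ⟨d, rfl⟩ := mem_hDum.mp hx
            simp [hgrp]
          · intro x hx hle hne
            rcases x with _ | _ | ⟨i', r⟩ | ⟨h, d⟩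
            · simp [hgrp] at hle
            · exact absurd rfl hne
            · simp [hgrp] at hle
            · by_cases hh : h = 0
              · subst hh
                exact mem_hDum.mpr ⟨d, rfl⟩
              · simp [hgrp, hh] at hle
        rw [hE, hDum_card]
      have tv0 : ∀ i : Fin (2*m+1),
          a ((C'.filter fun c' => pref (HVoter.v0 i) c' HCand.ww).card) = a 0 := by
        intro i
        have hE : (C'.filter fun c' => pref (HVoter.v0 i) c' HCand.ww) = ∅ := by
          refine exact0 _ _ _ (Finset.empty_subset _) (by simp) ?_
          intro x hx hle hne
          exfalso
          rcases x with _ | _ | ⟨i', r⟩ | ⟨h, d⟩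
          · simp [hgrp] at hle
          · exact hne rfl
          · simp [hgrp] at hle
          · by_cases hh : h = 2 <;> simp [hgrp, hh] at hle
        rw [hE]
        simp
      rw [posScore, sum_voters (fun v => a ((C'.filter fun c' => pref v c' HCand.ww).card))]
      rw [tw0]
      simp only [tv0]
      rw [Finset.sum_congr rfl (fun j _ => by
        rw [zu j true HCand.ww (by simp [hgrp]), zu j false HCand.ww (by simp [hgrp])])]
      rw [Finset.sum_congr rfl (fun i _ => zv0' i HCand.ww (by simp [hgrp]))]
      simp [Finset.sum_const, Finset.card_univ]
      push_cast
      ring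
    · -- bound for all other candidates
      intro c hc hcp hcw
      have hgen : ∀ v : HVoter m, a ((C'.filter fun c' => pref v c' c).card) ≤ a 0 :=
        fun v => hamono 0 _ (Nat.zero_le _)
      rw [posScore, sum_voters (fun v => a ((C'.filter fun c' => pref v c' c).card))]
      have hsum_u_le : (∑ j : Fin m, (a ((C'.filter fun c' => pref (HVoter.u j true) c' c).card)
            + a ((C'.filter fun c' => pref (HVoter.u j false) c' c).card)))
          ≤ (m : ℤ) * (2 * a 0) := by
        calc _ ≤ ∑ _j : Fin m, (a 0 + a 0) :=
              Finset.sum_le_sum (fun j _ => add_le_add (hgen _) (hgen _))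
          _ = (m : ℤ) * (2 * a 0) := by
              simp only [Finset.sum_const, Finset.card_univ, Fintype.card_fin, nsmul_eq_mul]
              ring
      have hsum_v0_le : (∑ i : Fin (2*m+1), a ((C'.filter fun c' => pref (HVoter.v0 i) c' c).card))
          ≤ (2 * (m : ℤ) + 1) * a 0 := by
        calc _ ≤ ∑ _i : Fin (2*m+1), a 0 := Finset.sum_le_sum (fun i _ => hgen _)
          _ = (2 * (m : ℤ) + 1) * a 0 := by
              simp only [Finset.sum_const, Finset.card_univ, Fintype.card_fin, nsmul_eq_mul]
              push_cast
              ring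
      have hsum_v0'_le : (∑ i : Fin (2*m+1), a ((C'.filter fun c' => pref (HVoter.v0' i) c' c).card))
          ≤ (2 * (m : ℤ) + 1) * a 0 := by
        calc _ ≤ ∑ _i : Fin (2*m+1), a 0 := Finset.sum_le_sum (fun i _ => hgen _)
          _ = (2 * (m : ℤ) + 1) * a 0 := by
              simp only [Finset.sum_const, Finset.card_univ, Fintype.card_fin, nsmul_eq_mul]
              push_cast
              ring
      rcases c with _ | _ | ⟨i, r⟩ | ⟨h, d⟩
      · exact absurd rfl hcp
      · exact absurd rfl hcw
      · -- an element candidate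
        rw [zw0 _ (by simp [hgrp])]
        rw [Finset.sum_congr rfl (fun i _ => zv0 i _ (by simp [hgrp]))]
        rw [Finset.sum_congr rfl (fun i _ => zv0' i _ (by simp [hgrp]))]
        simp only [Finset.sum_const_zero, add_zero, zero_add]
        have hm : (m : ℤ) * (2 * a 0) ≤ (2 * (m : ℤ) + 1) * a 0 := by nlinarith [ha0 0]
        exact le_trans hsum_u_le hm
      · -- a dummy candidate
        fin_cases h
        · -- group 0 : only the voter w0 can contribute
          rw [Finset.sum_congr rfl (fun j _ => by
            rw [zu j true _ (by simp [hgrp]), zu j false _ (by simp [hgrp])])]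
          rw [Finset.sum_congr rfl (fun i _ => zv0 i _ (by simp [hgrp]))]
          rw [Finset.sum_congr rfl (fun i _ => zv0' i _ (by simp [hgrp]))]
          simp only [Finset.sum_const_zero, add_zero]
          have := hgen HVoter.w0
          nlinarith [ha0 0]
        · -- group 1 : only the u-voters can contribute
          rw [zw0 _ (by simp [hgrp])]
          rw [Finset.sum_congr rfl (fun i _ => zv0 i _ (by simp [hgrp]))]
          rw [Finset.sum_congr rfl (fun i _ => zv0' i _ (by simp [hgrp]))]
          simp only [Finset.sum_const_zero, add_zero, zero_add]
          have hm : (m : ℤ) * (2 * a 0) ≤ (2 * (m : ℤ) + 1) * a 0 := by nlinarith [ha0 0]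
          exact le_trans hsum_u_le hm
        · -- group 2 : only the v0 voters can contribute
          rw [zw0 _ (by simp [hgrp])]
          rw [Finset.sum_congr rfl (fun j _ => by
            rw [zu j true _ (by simp [hgrp]), zu j false _ (by simp [hgrp])])]
          rw [Finset.sum_congr rfl (fun i _ => zv0' i _ (by simp [hgrp]))]
          simp only [Finset.sum_const_zero, add_zero, zero_add]
          exact hsum_v0_le
        · -- group 3 : only the v0' voters can contribute
          rw [zw0 _ (by simp [hgrp])]
          rw [Finset.sum_congr rfl (fun j _ => by
            rw [zu j true _ (by simp [hgrp]), zu j false _ (by simp [hgrp])])]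
          rw [Finset.sum_congr rfl (fun i _ => zv0 i _ (by simp [hgrp]))]
          simp only [Finset.sum_const_zero, add_zero, zero_add]
          exact hsum_v0'_le
  -- now the two directions
  constructor
  · -- necessary president → no hitting set
    intro hNP
    rintro ⟨S', hcard, hhit⟩
    -- turn the hitting set into a selection function
    have hσ0 : ∃ σ0 : Fin k → Fin n, ∀ j : Fin m, ∃ i, σ0 i ∈ F j := by
      have hn : 0 < n := by omega
      rcases S'.eq_empty_or_nonempty with rfl | ⟨s0, hs0⟩
      · refine ⟨fun _ => ⟨0, hn⟩, fun j => ?_⟩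
        obtain ⟨s, hs, -⟩ := hhit j
        simp at hs
      · refine ⟨fun i => S'.toList.getD i.val s0, fun j => ?_⟩
        obtain ⟨s, hs, hsF⟩ := hhit j
        have hsl : s ∈ S'.toList := Finset.mem_toList.mpr hs
        obtain ⟨idx, hidx, hget⟩ := List.mem_iff_getElem.mp hsl
        have hlen : S'.toList.length = S'.card := Finset.length_toList S'
        refine ⟨⟨idx, by omega⟩, ?_⟩
        have hg : S'.toList.getD idx s0 = s := by
          rw [List.getD_eq_getElem _ _ hidx]
          exact hget
        show S'.toList.getD idx s0 ∈ F j
        rw [hg]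
        exact hsF
    obtain ⟨σ0, hσ0hit⟩ := hσ0
    -- build the corresponding nominee set
    set C'0 : Finset (HCand n k ℓ) :=
      ({HCand.pp, HCand.ww} : Finset (HCand n k ℓ))
        ∪ Finset.univ.image (fun i => HCand.elem i (σ0 i))
        ∪ Finset.univ.image (fun hd : Fin 4 × Fin (ℓ - 1) => HCand.dum hd.1 hd.2) with hC'0
    have hmem0 : ∀ x : HCand n k ℓ, x ∈ C'0 ↔
        (x = HCand.pp ∨ x = HCand.ww ∨ (∃ i, x = HCand.elem i (σ0 i)) ∨
          ∃ h d, x = HCand.dum h d) := by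
      intro x
      simp [hC'0, Finset.mem_union, Finset.mem_image, eq_comm]
    have hnom0 : IsNomineeSet (hparties n k ℓ) C'0 := by
      intro Pt hPt
      rw [hparties, Finset.mem_image] at hPt
      obtain ⟨c, -, rfl⟩ := hPt
      rw [Finset.card_eq_one]
      rcases c with _ | _ | ⟨i, r⟩ | ⟨h, d⟩
      · refine ⟨HCand.pp, ?_⟩
        ext x
        simp only [Finset.mem_inter, Finset.mem_filter, Finset.mem_univ, true_and,
          Finset.mem_singleton, hmem0]
        constructor
        · rintro ⟨-, hx⟩
          rcases x with _ | _ | ⟨i', r'⟩ | ⟨h', d'⟩ <;> simp [hrep] at hx ⊢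
        · rintro rfl
          exact ⟨Or.inl rfl, rfl⟩
      · refine ⟨HCand.ww, ?_⟩
        ext x
        simp only [Finset.mem_inter, Finset.mem_filter, Finset.mem_univ, true_and,
          Finset.mem_singleton, hmem0]
        constructor
        · rintro ⟨-, hx⟩
          rcases x with _ | _ | ⟨i', r'⟩ | ⟨h', d'⟩ <;> simp [hrep] at hx ⊢
        · rintro rfl
          exact ⟨Or.inr (Or.inl rfl), rfl⟩
      · refine ⟨HCand.elem i (σ0 i), ?_⟩
        ext x
        simp only [Finset.mem_inter, Finset.mem_filter, Finset.mem_univ, true_and,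
          Finset.mem_singleton, hmem0]
        constructor
        · rintro ⟨hx0, hx⟩
          rcases x with _ | _ | ⟨i', r'⟩ | ⟨h', d'⟩
          · exact absurd hx (by simp [hrep])
          · exact absurd hx (by simp [hrep])
          · have hii : i' = i := by simpa [hrep] using hx
            subst hii
            rcases hx0 with h1 | h1 | ⟨i'', h1⟩ | ⟨h'', d'', h1⟩
            · cases h1
            · cases h1
            · injection h1 with e1 e2
              subst e1
              subst e2
              rfl
            · cases h1
          · exact absurd hx (by simp [hrep])
        · rintro rfl
          exact ⟨Or.inr (Or.inr (Or.inl ⟨i, rfl⟩)), rfl⟩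
      · refine ⟨HCand.dum h d, ?_⟩
        ext x
        simp only [Finset.mem_inter, Finset.mem_filter, Finset.mem_univ, true_and,
          Finset.mem_singleton, hmem0]
        constructor
        · rintro ⟨-, hx⟩
          rcases x with _ | _ | ⟨i', r'⟩ | ⟨h', d'⟩ <;> simp [hrep, Prod.ext_iff] at hx ⊢
          exact hx
        · rintro rfl
          exact ⟨Or.inr (Or.inr (Or.inr ⟨h, d, rfl⟩)), rfl⟩
    obtain ⟨σ, hmemσ, hwwC, hscp, hscw, -⟩ := main C'0 hnom0
    have hσeq : ∀ i, σ0 i = σ i := by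
      intro i
      exact (hmemσ i (σ0 i)).mp ((hmem0 _).mpr (Or.inr (Or.inr (Or.inl ⟨i, rfl⟩))))
    have hppC : HCand.pp ∈ C'0 := (hmem0 _).mpr (Or.inl rfl)
    have hle := hNP C'0 hnom0 hppC HCand.ww hwwC
    rw [hscp, hscw] at hle
    have hzsum : (∑ j : Fin m,
        2 * a ((Finset.univ.filter fun i => σ i ∈ F j).card + (ℓ - 1))) = 0 := by
      apply Finset.sum_eq_zero
      intro j _
      obtain ⟨i, hi⟩ := hσ0hit j
      have hone : 1 ≤ (Finset.univ.filter fun i => σ i ∈ F j).card := by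
        refine Finset.card_pos.mpr ⟨i, ?_⟩
        rw [Finset.mem_filter]
        exact ⟨Finset.mem_univ i, hσeq i ▸ hi⟩
      rw [hzero _ (by omega)]
      ring
    rw [hzsum] at hle
    linarith
  · -- no hitting set → necessary president
    intro hno
    intro C' hC hppC c hc
    obtain ⟨σ, hmemσ, hwwC, hscp, hscw, hbound⟩ := main C' hC
    -- some set is missed
    have hmiss : ∃ j : Fin m, (Finset.univ.filter fun i => σ i ∈ F j).card = 0 := by
      by_contra hcon
      push_neg at hcon
      refine hno ⟨Finset.univ.image σ, ?_, ?_⟩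
      · calc (Finset.univ.image σ).card ≤ Finset.univ.card := Finset.card_image_le
          _ = k := by simp
      · intro j
        have h1 : (Finset.univ.filter fun i => σ i ∈ F j).Nonempty := by
          rw [← Finset.card_pos]
          have := hcon j
          omega
        obtain ⟨i, hi⟩ := h1
        rw [Finset.mem_filter] at hi
        exact ⟨σ i, Finset.mem_image_of_mem σ (Finset.mem_univ i), hi.2⟩
    obtain ⟨j0, hj0⟩ := hmiss
    have hsum_ge : a (ℓ - 1)
        ≤ ∑ j : Fin m, 2 * a ((Finset.univ.filter fun i => σ i ∈ F j).card + (ℓ - 1)) := by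
      have h1 := Finset.single_le_sum
        (f := fun j : Fin m => 2 * a ((Finset.univ.filter fun i => σ i ∈ F j).card + (ℓ - 1)))
        (fun j _ => mul_nonneg (by norm_num) (ha0 _)) (Finset.mem_univ j0)
      simp only [hj0, zero_add] at h1
      linarith [hpos.le]
    by_cases hcp : c = HCand.pp
    · subst hcp; exact le_refl _
    by_cases hcw : c = HCand.ww
    · subst hcw
      rw [hscp, hscw]
      linarith
    · have h2 := hbound c hc hcp hcw
      rw [hscp]
      have h3 : (0:ℤ) ≤ ∑ j : Fin m,
          2 * a ((Finset.univ.filter fun i => σ i ∈ F j).card + (ℓ - 1)) := by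
        apply Finset.sum_nonneg
        intro j _
        exact mul_nonneg (by norm_num) (ha0 _)
      linarith
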